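/- (Theorem 1, Sill) Let f: [0,1]^d → ℝ be continuous, coordinatewise non-decreasing, and Lipschitz continuous (bounded partial derivatives). Then for every ε > 0 there exist K ≥ 1, group sizes h₁,…,h_K ≥ 1, nonnegative weight vectors w^(k,j) ∈ ℝ^d and biases b^(k,j) ∈ ℝ such that the MM network output y satisfies |f(x) − y(x)| < ε for all x ∈ [0,1]^d. -/
import Mathlib

/-- Output of a min-max (MM) network: `y(x) = min_k max_j (w^(k,j)·x − b^(k,j))`. -/
noncomputable def mmOut {d K : ℕ} {h : Fin K → ℕ} (hK : 0 < K) (hh : ∀ k, 0 < h k)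
    (w : (k : Fin K) → Fin (h k) → Fin d → ℝ)
    (b : (k : Fin K) → Fin (h k) → ℝ) (x : Fin d → ℝ) : ℝ :=
  haveI : Nonempty (Fin K) := Fin.pos_iff_nonempty.mp hK
  Finset.univ.inf' Finset.univ_nonempty fun k =>
    haveI : Nonempty (Fin (h k)) := Fin.pos_iff_nonempty.mp (hh k)
    Finset.univ.sup' Finset.univ_nonempty fun j => (∑ i, w k j i * x i) - b k j

/-- (Sill) Every continuous, coordinatewise non-decreasing, Lipschitz function
`f : [0,1]^d → ℝ` can be approximated uniformly to within any `ε > 0` by a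
min-max network with nonnegative weights. -/
theorem mm_universal_approximation {d : ℕ} (f : (Fin d → ℝ) → ℝ)
    (hcont : ContinuousOn f (Set.Icc 0 1))
    (hmono : MonotoneOn f (Set.Icc 0 1))
    (hlip : ∃ C : NNReal, LipschitzOnWith C f (Set.Icc 0 1))
    (ε : ℝ) (hε : 0 < ε) :
    ∃ (K : ℕ) (hK : 0 < K) (h : Fin K → ℕ) (hh : ∀ k, 0 < h k)
      (w : (k : Fin K) → Fin (h k) → Fin d → ℝ)
      (b : (k : Fin K) → Fin (h k) → ℝ),
      (∀ k j i, 0 ≤ w k j i) ∧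
      ∀ x ∈ Set.Icc (0 : Fin d → ℝ) 1, |f x - mmOut hK hh w b x| < ε := by
  obtain ⟨C, hC⟩ := hlip
  set n : ℕ := ⌈(C : ℝ) / ε⌉₊ + 1 with hn_def
  have hnR : (0 : ℝ) < n := by positivity
  have hCn : (C : ℝ) / n < ε := by
    rw [div_lt_iff₀ hnR]
    have h1 : (C : ℝ) ≤ ⌈(C : ℝ) / ε⌉₊ * ε := (div_le_iff₀ hε).mp (Nat.le_ceil _)
    have h2 : ((⌈(C : ℝ) / ε⌉₊ : ℝ)) * ε < n * ε := by
      apply mul_lt_mul_of_pos_right _ hε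
      exact_mod_cast Nat.lt_succ_self _
    nlinarith
  set P : (Fin d → Fin (n + 1)) → Fin d → ℝ := fun p i => (p i : ℝ) / n with hP_def
  have hPmem : ∀ p, P p ∈ Set.Icc (0 : Fin d → ℝ) 1 := by
    intro p
    constructor
    · intro i; exact div_nonneg (Nat.cast_nonneg _) hnR.le
    · intro i
      have : ((p i : ℕ) : ℝ) ≤ n := by exact_mod_cast Nat.lt_succ_iff.mp (p i).isLt
      exact (div_le_one hnR).mpr this
  set e := (Fintype.equivFin (Fin d → Fin (n + 1))).symm with he_def
  set es := (Fintype.equivFin (Finset (Fin d))).symm with hes_def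
  -- the value of the (k,j) affine unit
  have hval : ∀ (k : Fin (Fintype.card (Fin d → Fin (n + 1))))
      (j : Fin (Fintype.card (Finset (Fin d)))) (x : Fin d → ℝ),
      (∑ i, (if i ∈ es j then (C : ℝ) else 0) * x i) -
        ((C : ℝ) * (∑ i ∈ es j, P (e k) i) - f (P (e k)))
      = (C : ℝ) * ∑ i ∈ es j, (x i - P (e k) i) + f (P (e k)) := by
    intro k j x
    have h1 : (∑ i, (if i ∈ es j then (C : ℝ) else 0) * x i)
        = ∑ i ∈ es j, (C : ℝ) * x i := by
      simp only [ite_mul, zero_mul]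
      rw [← Finset.sum_filter]
      congr 1
      simp [Finset.filter_mem_eq_inter]
    rw [h1, Finset.sum_sub_distrib, mul_sub, Finset.mul_sum, Finset.mul_sum]
    ring
  -- lower bound: every group value is ≥ f x
  have hlow : ∀ x ∈ Set.Icc (0 : Fin d → ℝ) 1, ∀ p : Fin d → Fin (n + 1),
      f x ≤ (C : ℝ) * ∑ i ∈ Finset.univ.filter (fun i => P p i < x i), (x i - P p i)
            + f (P p) := by
    intro x hx p
    set S₀ := Finset.univ.filter (fun i => P p i < x i) with hS₀
    set T := ∑ i ∈ S₀, (x i - P p i) with hT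
    have hT0 : 0 ≤ T := Finset.sum_nonneg fun i hi => by
      have := (Finset.mem_filter.mp hi).2; linarith
    set q : Fin d → ℝ := fun i => min (x i) (P p i) with hq_def
    have hq : q ∈ Set.Icc (0 : Fin d → ℝ) 1 := by
      constructor
      · intro i; exact le_min (hx.1 i) ((hPmem p).1 i)
      · intro i; exact min_le_of_left_le (hx.2 i)
    have hqP : q ≤ P p := fun i => min_le_right _ _
    have h1 : f q ≤ f (P p) := hmono hq (hPmem p) hqP
    have hdist : dist x q ≤ T := by
      rw [dist_pi_le_iff hT0]
      intro i
      rw [Real.dist_eq]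
      rcases le_or_gt (x i) (P p i) with h | h
      · have : q i = x i := min_eq_left h
        rw [this, sub_self, abs_zero]; exact hT0
      · have hqi : q i = P p i := min_eq_right h.le
        rw [hqi, abs_of_nonneg (by linarith)]
        exact Finset.single_le_sum (f := fun i => x i - P p i)
          (fun j hj => sub_nonneg.mpr ((Finset.mem_filter.mp hj).2).le)
          (Finset.mem_filter.mpr ⟨Finset.mem_univ i, h⟩)
    have h2 : f x - f q ≤ (C : ℝ) * T := by
      calc f x - f q ≤ dist (f x) (f q) := by rw [Real.dist_eq]; exact le_abs_self _
        _ ≤ (C : ℝ) * dist x q := hC.dist_le_mul x hx q hq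
        _ ≤ (C : ℝ) * T := mul_le_mul_of_nonneg_left hdist C.coe_nonneg
    linarith
  -- upper bound: a good grid point just above x
  have hup : ∀ x ∈ Set.Icc (0 : Fin d → ℝ) 1, ∃ p : Fin d → Fin (n + 1),
      (∀ i, x i ≤ P p i) ∧ f (P p) ≤ f x + (C : ℝ) / n := by
    intro x hx
    have hceil : ∀ i, ⌈x i * n⌉₊ < n + 1 := by
      intro i
      refine Nat.lt_succ_of_le (Nat.ceil_le.mpr ?_)
      have h1i : x i ≤ 1 := hx.2 i
      nlinarith
    set p' : Fin d → Fin (n + 1) := fun i => ⟨⌈x i * n⌉₊, hceil i⟩ with hp'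
    have hxle : ∀ i, x i ≤ P p' i := by
      intro i
      rw [hP_def]
      dsimp [p']
      rw [le_div_iff₀ hnR]
      exact Nat.le_ceil _
    have hdist : dist (P p') x ≤ 1 / n := by
      rw [dist_pi_le_iff (by positivity)]
      intro i
      rw [Real.dist_eq, abs_of_nonneg (by linarith [hxle i])]
      have hx0 : 0 ≤ x i := hx.1 i
      have h5 : (⌈x i * n⌉₊ : ℝ) < x i * n + 1 := Nat.ceil_lt_add_one (by positivity)
      have key : (P p' i) ≤ x i + 1 / n := by
        rw [hP_def]
        dsimp [p']
        rw [div_le_iff₀ hnR,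
          show (x i + 1 / (n : ℝ)) * n = x i * n + 1 by field_simp]
        exact h5.le
      linarith
    refine ⟨p', hxle, ?_⟩
    have h6 : f (P p') - f x ≤ (C : ℝ) * (1 / n) := by
      calc f (P p') - f x ≤ dist (f (P p')) (f x) := by
            rw [Real.dist_eq]; exact le_abs_self _
        _ ≤ (C : ℝ) * dist (P p') x := hC.dist_le_mul _ (hPmem p') x hx
        _ ≤ (C : ℝ) * (1 / n) := mul_le_mul_of_nonneg_left hdist C.coe_nonneg
    rw [mul_one_div] at h6
    linarith
  refine ⟨Fintype.card (Fin d → Fin (n + 1)), Fintype.card_pos,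
    fun _ => Fintype.card (Finset (Fin d)), fun _ => Fintype.card_pos,
    fun k j i => if i ∈ es j then (C : ℝ) else 0,
    fun k j => (C : ℝ) * (∑ i ∈ es j, P (e k) i) - f (P (e k)), ?_, ?_⟩
  · intro k j i
    dsimp only
    split
    · exact C.coe_nonneg
    · exact le_refl 0
  intro x hx
  unfold mmOut
  set y := Finset.univ.inf' Finset.univ_nonempty fun k =>
      Finset.univ.sup' Finset.univ_nonempty fun j =>
        (∑ i, (if i ∈ es j then (C : ℝ) else 0) * x i) -
          ((C : ℝ) * (∑ i ∈ es j, P (e k) i) - f (P (e k))) with hy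
  have hylow : f x ≤ y := by
    rw [hy]
    refine Finset.le_inf' _ _ fun k _ => ?_
    set j₀ := es.symm (Finset.univ.filter (fun i => P (e k) i < x i)) with hj₀
    calc f x ≤ (C : ℝ) * ∑ i ∈ Finset.univ.filter (fun i => P (e k) i < x i),
          (x i - P (e k) i) + f (P (e k)) := hlow x hx (e k)
      _ = (∑ i, (if i ∈ es j₀ then (C : ℝ) else 0) * x i) -
            ((C : ℝ) * (∑ i ∈ es j₀, P (e k) i) - f (P (e k))) := by
          rw [hval k j₀ x, hj₀, Equiv.apply_symm_apply]
      _ ≤ _ := Finset.le_sup'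
          (fun j => (∑ i, (if i ∈ es j then (C : ℝ) else 0) * x i) -
            ((C : ℝ) * (∑ i ∈ es j, P (e k) i) - f (P (e k))))
          (Finset.mem_univ j₀)
  have hyup : y ≤ f x + (C : ℝ) / n := by
    obtain ⟨p', hxle, hfp⟩ := hup x hx
    rw [hy]
    refine le_trans (Finset.inf'_le _ (Finset.mem_univ (e.symm p'))) ?_
    refine Finset.sup'_le _ _ fun j _ => ?_
    rw [hval (e.symm p') j x, Equiv.apply_symm_apply]
    have hs : ∑ i ∈ es j, (x i - P p' i) ≤ 0 :=
      Finset.sum_nonpos fun i _ => by linarith [hxle i]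
    have h7 : (C : ℝ) * ∑ i ∈ es j, (x i - P p' i) ≤ 0 :=
      mul_nonpos_of_nonneg_of_nonpos C.coe_nonneg hs
    linarith
  rw [abs_sub_lt_iff]
  constructor <;> linarith
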